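/- Let m ≥ 1 be an integer, let X ⊆ ℝ^m be a finite set with n := |X| ≥ 3, and suppose there exist real constants c_1, c_2 with 0 < c_1 ≤ c_2 such that c_1 ≤ vol_2(x, y, z) ≤ c_2 for every triple of distinct points x, y, z ∈ X. Then n ≤ ((16·c_2² + 1)/(2·c_1) + 1)^m; in particular m ≥ Ω(log n), i.e., m ≥ log n / log((16·c_2² + 1)/(2·c_1) + 1). -/

import Mathlib

open scoped BigOperators

/-- An alternating real-valued function on `j`-tuples of `X`
(a `(j-1)`-dimensional chain on the complete complex on `X`). -/
def AltChain {X : Type*} {j : ℕ} (α : (Fin j → X) → ℝ) : Prop :=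
  ∀ (π : Equiv.Perm (Fin j)) (x : Fin j → X),
    α (x ∘ π) = ((Equiv.Perm.sign π : ℤ) : ℝ) * α x

/-- The boundary operator: `(∂α)(y₁,…,y_j) = ∑_{x ∈ X} α(x, y₁, …, y_j)`. -/
noncomputable def bdry {X : Type*} [Fintype X] {j : ℕ}
    (α : (Fin (j + 1) → X) → ℝ) : (Fin j → X) → ℝ :=
  fun y => ∑ x : X, α (Fin.cons x y)

/-- The elementary chain `1_t`: value `sign π` on the reordering of `t` by `π`,
and `0` on all other tuples. -/
noncomputable def unitChain {X : Type*} [DecidableEq X] {j : ℕ} (t : Fin j → X) :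
    (Fin j → X) → ℝ :=
  fun s => ∑ π : Equiv.Perm (Fin j),
    if s = t ∘ π then ((Equiv.Perm.sign π : ℤ) : ℝ) else 0

/-- The coboundary operator:
`(δf)(x₁,…,x_{j+2}) = ∑ᵢ (-1)^(i+1) f(x₁,…,x̂ᵢ,…,x_{j+2})` (`0`-indexed sign `(-1)^i`). -/
noncomputable def cobdry {X : Type*} {j : ℕ}
    (f : (Fin (j + 1) → X) → ℝ) : (Fin (j + 2) → X) → ℝ :=
  fun x => ∑ i : Fin (j + 2), (-1 : ℝ) ^ (i : ℕ) * f (x ∘ i.succAbove)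

/-- A pseudo metric of arity `K` (a pseudo `K`-metric): nonnegative, vanishing on
non-injective tuples, permutation invariant, satisfying the simplex inequality. -/
structure IsPseudoMetric {X : Type*} (K : ℕ) (d : (Fin K → X) → ℝ) : Prop where
  nonneg : ∀ x, 0 ≤ d x
  eq_zero : ∀ x, ¬ Function.Injective x → d x = 0
  perm : ∀ (π : Equiv.Perm (Fin K)) (x), d (x ∘ π) = d x
  simplex : ∀ (x : Fin K → X) (y : X),
    d x ≤ ∑ i : Fin K, d (Function.update x i y)

/-- A strong pseudo metric of arity `k + 1` (a strong pseudo `(k+1)`-metric).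
The strong simplex inequality `d t ≤ ∑_τ |α(τ)| * d(τ)` (with the sum over
`(k+1)`-element subsets `τ` of `X`, each evaluated on any fixed ordering of `τ`)
is stated in the equivalent form `(k+1)! * d t ≤ ∑_s |α(s)| * d(s)` with the sum
over all `(k+1)`-tuples `s`: since `α` is alternating and `d` is permutation
invariant, the summand depends only on the underlying set of `s` (it vanishes on
tuples with repeated entries), and each `(k+1)`-element subset has exactly
`(k+1)!` orderings. -/
structure IsStrongPseudoMetric {X : Type*} [Fintype X] [DecidableEq X] (k : ℕ)
    (d : (Fin (k + 1) → X) → ℝ) : Prop where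
  nonneg : ∀ x, 0 ≤ d x
  eq_zero : ∀ x, ¬ Function.Injective x → d x = 0
  perm : ∀ (π : Equiv.Perm (Fin (k + 1))) (x), d (x ∘ π) = d x
  strong_simplex : ∀ t : Fin (k + 1) → X, Function.Injective t →
    ∀ α : (Fin (k + 1) → X) → ℝ, AltChain α → bdry α = bdry (unitChain t) →
      ((k + 1).factorial : ℝ) * d t ≤ ∑ s : Fin (k + 1) → X, |α s| * d s

/-- `(X, d)` is a coboundary metric of arity `k + 2` in `m` dimensions with respect
to the norm `ν` on `ℝ^m`: there are chains `f 1, …, f m` on `(k+1)`-tuples (i.e.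
`(k+2)-2`-dimensional chains for arity `k+2`) whose simultaneous coboundary
realizes `d` on injective tuples, and `d` vanishes on non-injective tuples. -/
def IsCoboundaryMetric {X : Type*} (k m : ℕ) (ν : (Fin m → ℝ) → ℝ)
    (d : (Fin (k + 2) → X) → ℝ) : Prop :=
  ∃ f : Fin m → ((Fin (k + 1) → X) → ℝ),
    (∀ i, AltChain (f i)) ∧
    (∀ x, Function.Injective x → d x = ν (fun i => cobdry (f i) x)) ∧
    (∀ x, ¬ Function.Injective x → d x = 0)

/-- `ν` is a norm on `ℝ^m`. -/
structure IsNorm {m : ℕ} (ν : (Fin m → ℝ) → ℝ) : Prop where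
  nonneg : ∀ x, 0 ≤ ν x
  eq_zero_iff : ∀ x, ν x = 0 ↔ x = 0
  homog : ∀ (c : ℝ) (x), ν (c • x) = |c| * ν x
  triangle : ∀ x y, ν (x + y) ≤ ν x + ν y

/-- The `ℓ_p` norm on `ℝ^m` for real `p`. -/
noncomputable def lpNorm (p : ℝ) {m : ℕ} (x : Fin m → ℝ) : ℝ :=
  (∑ i, |x i| ^ p) ^ (1 / p)

/-- The `ℓ_1` norm on `ℝ^m`. -/
noncomputable def l1Norm {m : ℕ} (x : Fin m → ℝ) : ℝ := ∑ i, |x i|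

/-- The `ℓ_2` (Euclidean) norm on `ℝ^m`. -/
noncomputable def l2Norm {m : ℕ} (x : Fin m → ℝ) : ℝ := Real.sqrt (∑ i, x i ^ 2)

/-- The `ℓ_∞` norm on `ℝ^m` (the sup norm, which is the norm of `Fin m → ℝ`). -/
noncomputable def linfNorm {m : ℕ} (x : Fin m → ℝ) : ℝ := ‖x‖

/- The apex extension of `d` (of arity `K`), with the apex being
`none : Option X` (a new element not in `X`): on an injective `(K+1)`-tuple
containing the apex in position `i` it is `d` of the tuple with position `i`
removed, and it is `0` on all other tuples. -/
open Classical in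
noncomputable def apexExt {X : Type*} {K : ℕ} (d : (Fin K → X) → ℝ) :
    (Fin (K + 1) → Option X) → ℝ := fun x =>
  if h : Function.Injective x ∧ ∃ i, x i = none then
    d (fun j =>
      Option.get (x ((Classical.choose h.2).succAbove j))
        (by
          rw [Option.isSome_iff_ne_none]
          intro hnone
          exact Fin.succAbove_ne (Classical.choose h.2) j
            (h.1 (hnone.trans (Classical.choose_spec h.2).symm))))
  else 0

/-- The `K`-dimensional volume of the simplex with vertices `y 0, …, y K` in `ℝ^m`:
`(1/K!) * √(det (AᵀA))` where `A` is the `m × K` matrix with columns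
`y i - y 0`, `i = 1, …, K`. -/
noncomputable def simplexVolume {m K : ℕ} (y : Fin (K + 1) → (Fin m → ℝ)) : ℝ :=
  (1 / (K.factorial : ℝ)) *
    Real.sqrt
      (Matrix.det
        (Matrix.of fun i j : Fin K =>
          ∑ l : Fin m, (y i.succ l - y 0 l) * (y j.succ l - y 0 l)))

/-- The area of the triangle with vertices `x, y, z ∈ ℝ^m`. -/
noncomputable def triangleArea {m : ℕ} (x y z : Fin m → ℝ) : ℝ :=
  simplexVolume (m := m) (K := 2) ![x, y, z]


open RealInnerProductSpace MeasureTheory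

section Gv
variable {E : Type*} [NormedAddCommGroup E] [InnerProductSpace ℝ E]

noncomputable def Gv (a b : E) : ℝ := Real.sqrt (‖a‖^2 * ‖b‖^2 - ⟪a,b⟫^2)

lemma Gv_arg_nonneg (a b : E) : 0 ≤ ‖a‖^2 * ‖b‖^2 - ⟪a,b⟫^2 := by
  have h := abs_real_inner_le_norm a b
  have h2 : |⟪a,b⟫|^2 ≤ (‖a‖*‖b‖)^2 := by
    apply pow_le_pow_left₀ (abs_nonneg _) h
  rw [sq_abs] at h2
  nlinarith

lemma Gv_nonneg (a b : E) : 0 ≤ Gv a b := Real.sqrt_nonneg _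

lemma Gv_le (a b : E) : Gv a b ≤ ‖a‖ * ‖b‖ := by
  rw [Gv]
  have : ‖a‖^2 * ‖b‖^2 - ⟪a,b⟫^2 ≤ (‖a‖*‖b‖)^2 := by nlinarith [sq_nonneg (⟪a,b⟫)]
  calc Real.sqrt (‖a‖^2 * ‖b‖^2 - ⟪a,b⟫^2) ≤ Real.sqrt ((‖a‖*‖b‖)^2) := Real.sqrt_le_sqrt this
  _ = ‖a‖*‖b‖ := Real.sqrt_sq (by positivity)

lemma Gv_smul_left (c : ℝ) (a b : E) : Gv (c • a) b = |c| * Gv a b := by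
  rw [Gv, Gv, real_inner_smul_left, norm_smul, ← Real.sqrt_sq_eq_abs, ← Real.sqrt_mul (sq_nonneg c)]
  congr 1
  rw [Real.norm_eq_abs, mul_pow, mul_pow, sq_abs]
  ring

lemma pyth_unit (e a : E) (he : ‖e‖ = 1) : ‖a - ⟪a,e⟫ • e‖^2 = ‖a‖^2 - ⟪a,e⟫^2 := by
  rw [norm_sub_sq_real, real_inner_smul_right, norm_smul, Real.norm_eq_abs, he]
  ring_nf
  rw [sq_abs]
  ring

lemma Gv_unit_left (e b : E) (he : ‖e‖ = 1) : Gv e b = ‖b - ⟪b,e⟫ • e‖ := by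
  rw [Gv, he]
  rw [show ‖b - ⟪b,e⟫ • e‖ = Real.sqrt (‖b - ⟪b,e⟫ • e‖^2) from (Real.sqrt_sq (norm_nonneg _)).symm]
  rw [pyth_unit e b he]
  congr 1
  rw [real_inner_comm]
  ring

lemma Gv_proj (a b : E) (hb : b ≠ 0) : Gv a b = ‖b‖ * ‖a - (⟪a,b⟫ / ‖b‖^2) • b‖ := by
  have hbn : (0:ℝ) < ‖b‖ := norm_pos_iff.mpr hb
  have hb2 : (0:ℝ) < ‖b‖^2 := by positivity
  have key : ‖a - (⟪a,b⟫ / ‖b‖^2) • b‖^2 = ‖a‖^2 - ⟪a,b⟫^2/‖b‖^2 := by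
    rw [norm_sub_sq_real, real_inner_smul_right, norm_smul, Real.norm_eq_abs, mul_pow, sq_abs]
    field_simp
    ring
  rw [Gv, show ‖a‖^2*‖b‖^2 - ⟪a,b⟫^2 = ‖b‖^2 * (‖a‖^2 - ⟪a,b⟫^2/‖b‖^2) by field_simp]
  rw [Real.sqrt_mul (sq_nonneg _), ← key]
  try rw [Real.sqrt_sq (norm_nonneg b)]
  try rw [Real.sqrt_sq (norm_nonneg _)]

lemma Gv_add_left (a₁ a₂ b : E) : Gv (a₁ + a₂) b ≤ Gv a₁ b + Gv a₂ b := by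
  rcases eq_or_ne b 0 with rfl | hb
  · simp [Gv, inner_zero_right]
    try positivity
  · rw [Gv_proj _ _ hb, Gv_proj _ _ hb, Gv_proj _ _ hb]
    rw [← mul_add]
    apply mul_le_mul_of_nonneg_left _ (norm_nonneg b)
    have : a₁ + a₂ - (⟪a₁ + a₂, b⟫ / ‖b‖^2) • b
        = (a₁ - (⟪a₁,b⟫ / ‖b‖^2) • b) + (a₂ - (⟪a₂,b⟫ / ‖b‖^2) • b) := by
      rw [inner_add_left]
      module
    rw [this]
    exact norm_add_le _ _
end Gv

noncomputable abbrev toE {m : ℕ} (v : Fin m → ℝ) : EuclideanSpace ℝ (Fin m) :=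
  (WithLp.equiv 2 _).symm v

lemma toE_sub {m : ℕ} (a b : Fin m → ℝ) : toE (a - b) = toE a - toE b := rfl

lemma toE_inj {m : ℕ} {a b : Fin m → ℝ} (h : toE a = toE b) : a = b :=
  (WithLp.equiv 2 _).symm.injective h

lemma inner_toE {m : ℕ} (a b : Fin m → ℝ) : (⟪toE a, toE b⟫ : ℝ) = ∑ l, a l * b l := by
  rw [PiLp.inner_apply]
  simp [RCLike.inner_apply, mul_comm]

lemma norm_toE_sq {m : ℕ} (a : Fin m → ℝ) : ‖toE a‖^2 = ∑ l, a l * a l := by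
  rw [← real_inner_self_eq_norm_sq, inner_toE]

lemma bridge {m : ℕ} (x y z : Fin m → ℝ) :
    triangleArea x y z = (1/2) * Gv (toE (y - x)) (toE (z - x)) := by
  have h1 : ∀ l, (![x, y, z] : Fin 3 → Fin m → ℝ) (Fin.succ 0) l = y l := fun l => rfl
  have h2 : ∀ l, (![x, y, z] : Fin 3 → Fin m → ℝ) (Fin.succ 1) l = z l := fun l => rfl
  have h0 : ∀ l, (![x, y, z] : Fin 3 → Fin m → ℝ) 0 l = x l := fun l => rfl
  have key : Matrix.det
        (Matrix.of fun i j : Fin 2 =>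
          ∑ l : Fin m, ((![x,y,z]) i.succ l - (![x,y,z]) 0 l) * ((![x,y,z]) j.succ l - (![x,y,z]) 0 l))
      = ‖toE (y - x)‖^2 * ‖toE (z - x)‖^2 - (⟪toE (y - x), toE (z - x)⟫ : ℝ)^2 := by
    rw [Matrix.det_fin_two]
    rw [norm_toE_sq, norm_toE_sq, inner_toE]
    simp only [Matrix.of_apply, Pi.sub_apply, h0, h1, h2]
    rw [show (∑ l : Fin m, (z l - x l) * (y l - x l)) = ∑ l : Fin m, (y l - x l) * (z l - x l) from
      Finset.sum_congr rfl (fun _ _ => mul_comm _ _)]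
    ring
  rw [triangleArea, simplexVolume, key, Gv]
  norm_num [Nat.factorial]

lemma pack_lemma {d : ℕ} (S : Finset (EuclideanSpace ℝ (Fin d))) (σ R : ℝ)
    (hσ : 0 < σ) (hR : 0 ≤ R)
    (hsep : ∀ u ∈ S, ∀ v ∈ S, u ≠ v → σ ≤ dist u v)
    (hball : ∀ u ∈ S, ‖u‖ ≤ R) :
    (S.card : ℝ) ≤ (2 * R / σ + 1) ^ d := by
  rcases Nat.eq_zero_or_pos d with hd | hd
  · subst hd
    have h1 : S.card ≤ 1 := Finset.card_le_one.mpr (fun a _ b _ => Subsingleton.elim a b)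
    rw [pow_zero]
    exact_mod_cast h1
  · haveI : NeZero d := ⟨hd.ne'⟩
    set c : ENNReal := volume (Metric.ball (0 : EuclideanSpace ℝ (Fin d)) 1) with hc
    have hc0 : c ≠ 0 := (Metric.measure_ball_pos volume 0 one_pos).ne'
    have hctop : c ≠ ⊤ := measure_ball_lt_top.ne
    have hdisj : (S : Set (EuclideanSpace ℝ (Fin d))).PairwiseDisjoint
        (fun u => Metric.ball u (σ/2)) := by
      intro u hu v hv huv
      exact Metric.ball_disjoint_ball (by
        have := hsep u hu v hv huv; linarith)
    have hsub : (⋃ u ∈ S, Metric.ball u (σ/2)) ⊆ Metric.ball 0 (R + σ/2) := by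
      intro x hx
      simp only [Set.mem_iUnion, Metric.mem_ball] at hx ⊢
      obtain ⟨u, hu, hxu⟩ := hx
      have h2 : dist x 0 ≤ dist x u + dist u 0 := dist_triangle _ _ _
      have h3 : dist u 0 ≤ R := by rw [dist_zero_right]; exact hball u hu
      linarith
    have hmeas : volume (⋃ u ∈ S, Metric.ball u (σ/2))
        = ∑ u ∈ S, volume (Metric.ball u (σ/2)) :=
      measure_biUnion_finset hdisj (fun u _ => measurableSet_ball)
    have hballvol : ∀ u : EuclideanSpace ℝ (Fin d),
        volume (Metric.ball u (σ/2)) = ENNReal.ofReal ((σ/2) ^ d) * c := by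
      intro u
      rw [hc, Measure.addHaar_ball volume u (by linarith : (0:ℝ) ≤ σ/2),
        finrank_euclideanSpace_fin]
    have hbig : volume (Metric.ball (0 : EuclideanSpace ℝ (Fin d)) (R + σ/2))
        = ENNReal.ofReal ((R + σ/2) ^ d) * c := by
      rw [hc, Measure.addHaar_ball volume _ (by linarith : (0:ℝ) ≤ R + σ/2),
        finrank_euclideanSpace_fin]
    have hchain : (S.card : ENNReal) * (ENNReal.ofReal ((σ/2) ^ d) * c)
        ≤ ENNReal.ofReal ((R + σ/2) ^ d) * c := by
      calc (S.card : ENNReal) * (ENNReal.ofReal ((σ/2) ^ d) * c)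
          = ∑ u ∈ S, volume (Metric.ball u (σ/2)) := by
            rw [Finset.sum_congr rfl (fun u _ => hballvol u), Finset.sum_const, nsmul_eq_mul]
        _ = volume (⋃ u ∈ S, Metric.ball u (σ/2)) := hmeas.symm
        _ ≤ volume (Metric.ball (0 : EuclideanSpace ℝ (Fin d)) (R + σ/2)) :=
            measure_mono hsub
        _ = ENNReal.ofReal ((R + σ/2) ^ d) * c := hbig
    rw [← mul_assoc] at hchain
    have hchain2 : (S.card : ENNReal) * ENNReal.ofReal ((σ/2) ^ d)
        ≤ ENNReal.ofReal ((R + σ/2) ^ d) :=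
      (ENNReal.mul_le_mul_iff_left hc0 hctop).mp hchain
    have hcard : (S.card : ℝ) * ((σ/2) ^ d) ≤ (R + σ/2) ^ d := by
      have h := hchain2
      rw [show ((S.card : ENNReal)) = ENNReal.ofReal (S.card : ℝ) by
        rw [ENNReal.ofReal_natCast], ← ENNReal.ofReal_mul (by positivity)] at h
      exact (ENNReal.ofReal_le_ofReal_iff (by positivity)).mp h
    have hpos : (0:ℝ) < (σ/2) ^ d := by positivity
    rw [show (2 * R / σ + 1 : ℝ) = (R + σ/2)/(σ/2) by field_simp]
    rw [div_pow, le_div_iff₀ hpos]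
    exact hcard

lemma le_of_sq_le_sq' {a b : ℝ} (ha : 0 ≤ a) (hb : 0 ≤ b) (h : a^2 ≤ b^2) : a ≤ b := by
  nlinarith

set_option maxHeartbeats 4000000 in
theorem main_bound (m : ℕ) (hm : 1 ≤ m) (X : Finset (Fin m → ℝ)) (hn : 3 ≤ X.card)
    (c₁ c₂ : ℝ) (hc₁ : 0 < c₁) (hc₁₂ : c₁ ≤ c₂)
    (hvol : ∀ x ∈ X, ∀ y ∈ X, ∀ z ∈ X, x ≠ y → x ≠ z → y ≠ z →
      c₁ ≤ triangleArea x y z ∧ triangleArea x y z ≤ c₂) :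
    (X.card : ℝ) ≤ ((16 * c₂ ^ 2 + 1) / (2 * c₁) + 1) ^ m := by
  classical
  have hc₂ : 0 < c₂ := lt_of_lt_of_le hc₁ hc₁₂
  set B : ℝ := (16 * c₂ ^ 2 + 1) / (2 * c₁) + 1 with hBdef
  -- areas in Gv form
  have harea : ∀ u ∈ X, ∀ v ∈ X, ∀ w ∈ X, u ≠ v → u ≠ w → v ≠ w →
      2*c₁ ≤ Gv (toE v - toE u) (toE w - toE u) ∧
        Gv (toE v - toE u) (toE w - toE u) ≤ 2*c₂ := by
    intro u hu v hv w hw h1 h2 h3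
    obtain ⟨hl, hr⟩ := hvol u hu v hv w hw h1 h2 h3
    rw [bridge, toE_sub, toE_sub] at hl hr
    constructor <;> linarith
  -- witnesses
  have hX3 : ∀ u ∈ X, ∀ v ∈ X, ∃ w ∈ X, w ≠ u ∧ w ≠ v := by
    intro u hu v hv
    have h1 : 1 ≤ ((X.erase u).erase v).card := by
      have h2 := Finset.pred_card_le_card_erase (s := X) (a := u)
      have h3 := Finset.pred_card_le_card_erase (s := X.erase u) (a := v)
      omega
    obtain ⟨w, hw⟩ := Finset.card_pos.mp (lt_of_lt_of_le one_pos h1)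
    have hw1 := Finset.mem_erase.mp hw
    have hw2 := Finset.mem_erase.mp hw1.2
    exact ⟨w, hw2.2, hw2.1, hw1.1⟩
  -- diametral pair
  have hXprodne : (X ×ˢ X).Nonempty := by
    obtain ⟨a, ha⟩ := Finset.card_pos.mp (by omega : 0 < X.card)
    exact ⟨(a,a), Finset.mem_product.mpr ⟨ha, ha⟩⟩
  obtain ⟨pq, hpqm, hpqmax⟩ := (X ×ˢ X).exists_max_image (fun w => ‖toE w.1 - toE w.2‖) hXprodne
  obtain ⟨hpX, hqX⟩ := Finset.mem_product.mp hpqm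
  set p := pq.1 with hp
  set q := pq.2 with hq
  set D : ℝ := ‖toE q - toE p‖ with hD
  have hDmax : ∀ u ∈ X, ∀ v ∈ X, ‖toE u - toE v‖ ≤ D := by
    intro u hu v hv
    have h := hpqmax (u,v) (Finset.mem_product.mpr ⟨hu,hv⟩)
    have h' : ‖toE u - toE v‖ ≤ ‖toE p - toE q‖ := by simpa using h
    rw [hD, norm_sub_rev (toE q)]
    exact h'
  have hD0 : 0 < D := by
    obtain ⟨a, ha, b, hb, hab⟩ := Finset.one_lt_card.mp (by omega : 1 < X.card)
    have h1 : (0:ℝ) < ‖toE a - toE b‖ := by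
      rw [norm_pos_iff, sub_ne_zero]
      exact fun h => hab (toE_inj h)
    exact lt_of_lt_of_le h1 (hDmax a ha b hb)
  have hpq : p ≠ q := by
    intro h
    rw [hD, h, sub_self, norm_zero] at hD0
    exact lt_irrefl _ hD0
  -- minimum distance
  have hmind : ∀ u ∈ X, ∀ v ∈ X, u ≠ v → 2*c₁/D ≤ ‖toE v - toE u‖ := by
    intro u hu v hv huv
    obtain ⟨w, hwX, hwu, hwv⟩ := hX3 u hu v hv
    have h1 := (harea u hu v hv w hwX huv (Ne.symm hwu) (Ne.symm hwv)).1
    have h2 : Gv (toE v - toE u) (toE w - toE u) ≤ ‖toE v - toE u‖ * ‖toE w - toE u‖ := Gv_le _ _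
    have h3 : ‖toE w - toE u‖ ≤ D := hDmax w hwX u hu
    have hnn : 0 ≤ ‖toE v - toE u‖ := norm_nonneg _
    rw [div_le_iff₀ hD0]
    nlinarith
  clear_value p q
  have hB8 : 8*c₂ ≤ 16*c₂^2 + 1 := by nlinarith [sq_nonneg (4*c₂ - 1)]
  rcases le_or_gt (D^2) (4*c₂) with hsmall | hbig
  · -- small diameter case: direct packing in dimension m
    set s : ℝ := 2*c₁/D with hs
    have hs0 : 0 < s := by positivity
    set S : Finset (EuclideanSpace ℝ (Fin m)) := X.image (fun u => toE u - toE p) with hS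
    have hinj : Set.InjOn (fun u : Fin m → ℝ => toE u - toE p) X := by
      intro a _ b _ hab
      exact toE_inj (by simpa using sub_left_injective hab)
    have hcard : S.card = X.card := Finset.card_image_of_injOn hinj
    have hpk := pack_lemma S s D hs0 hD0.le ?_ ?_
    · have hbase : 2*D/s + 1 ≤ B := by
        have h1 : 2*D/s = D^2/c₁ := by rw [hs]; field_simp
        rw [h1, hBdef]
        have h2 : D^2/c₁ ≤ (16*c₂^2+1)/(2*c₁) := by
          rw [div_le_div_iff₀ hc₁ (by positivity)]
          nlinarith
        linarith
      calc (X.card : ℝ) = (S.card : ℝ) := by rw [hcard]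
        _ ≤ (2*D/s + 1)^m := hpk
        _ ≤ B^m := by
          apply pow_le_pow_left₀ (by positivity) hbase
    · intro a haS b hbS hab
      obtain ⟨u, hu, rfl⟩ := Finset.mem_image.mp haS
      obtain ⟨v, hv, rfl⟩ := Finset.mem_image.mp hbS
      have huv : u ≠ v := by rintro rfl; exact hab rfl
      have := hmind v hv u hu (Ne.symm huv)
      rw [dist_eq_norm]
      calc s ≤ ‖toE u - toE v‖ := this
        _ = ‖(toE u - toE p) - (toE v - toE p)‖ := by abel_nf
    · intro a haS
      obtain ⟨u, hu, rfl⟩ := Finset.mem_image.mp haS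
      exact hDmax u hu p hpX
  · -- large diameter case
    set e : EuclideanSpace ℝ (Fin m) := D⁻¹ • (toE q - toE p) with hedef
    have he : ‖e‖ = 1 := by
      rw [hedef, norm_smul, Real.norm_eq_abs, abs_inv, abs_of_pos hD0, ← hD]
      field_simp
    have heD : D • e = toE q - toE p := by
      rw [hedef, smul_smul, mul_inv_cancel₀ hD0.ne', one_smul]
    have hee : (⟪e, e⟫ : ℝ) = 1 := by
      rw [real_inner_self_eq_norm_sq, he]; norm_num
    have hne : e ≠ 0 := by
      intro h; rw [h, norm_zero] at he; norm_num at he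
    clear_value D e
    set tt : (Fin m → ℝ) → ℝ := fun u => ⟪toE u - toE p, e⟫ with httdef
    set Qf : (Fin m → ℝ) → EuclideanSpace ℝ (Fin m) :=
      fun u => (toE u - toE p) - (tt u) • e with hQfdef
    have htt : ∀ u, tt u = ⟪toE u - toE p, e⟫ := fun _ => rfl
    have hQf : ∀ u, Qf u = (toE u - toE p) - (tt u) • e := fun _ => rfl
    clear_value tt Qf
    have hQorth : ∀ u, (⟪Qf u, e⟫ : ℝ) = 0 := by
      intro u
      rw [hQf, inner_sub_left, real_inner_smul_left, hee, mul_one, htt]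
      ring
    have httsub : ∀ u v : Fin m → ℝ, (⟪toE v - toE u, e⟫ : ℝ) = tt v - tt u := by
      intro u v
      rw [show toE v - toE u = (toE v - toE p) - (toE u - toE p) by abel, inner_sub_left,
        htt, htt]
    have htp : tt p = 0 := by rw [htt, sub_self, inner_zero_left]
    have htq : tt q = D := by
      rw [htt, ← heD, real_inner_smul_left, hee, mul_one]
    have hQp : Qf p = 0 := by rw [hQf, htp, zero_smul, sub_zero, sub_self]
    have hQq : Qf q = 0 := by rw [hQf, htq, heD]; abel
    have hdec : ∀ u v : Fin m → ℝ, toE v - toE u = (tt v - tt u) • e + (Qf v - Qf u) := by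
      intro u v
      rw [hQf, hQf, sub_smul]
      abel
    have hpyth : ∀ (s : ℝ) (w : EuclideanSpace ℝ (Fin m)), (⟪w, e⟫ : ℝ) = 0 →
        ‖s • e + w‖^2 = s^2 + ‖w‖^2 := by
      intro s w hw
      rw [norm_add_sq_real, real_inner_smul_left, real_inner_comm, hw, norm_smul,
        Real.norm_eq_abs, mul_pow, sq_abs, he]
      ring
    have hpythp : ∀ u : Fin m → ℝ, ‖toE u - toE p‖^2 = (tt u)^2 + ‖Qf u‖^2 := by
      intro u
      have h1 : toE u - toE p = tt u • e + Qf u := by rw [hQf]; abel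
      rw [h1, hpyth _ _ (hQorth u)]
    have hpythq : ∀ u : Fin m → ℝ, ‖toE u - toE q‖^2 = (tt u - D)^2 + ‖Qf u‖^2 := by
      intro u
      have h1 : toE u - toE q = (tt u - D) • e + Qf u := by
        rw [hQf, sub_smul, show (D:ℝ) • e = toE q - toE p from heD]
        abel
      rw [h1, hpyth _ _ (hQorth u)]
    have htle : ∀ u ∈ X, tt u ≤ D := by
      intro u hu
      have h1 := real_inner_le_norm (toE u - toE p) e
      rw [he, mul_one] at h1
      rw [htt]
      exact h1.trans (hDmax u hu p hpX)
    have htge : ∀ u ∈ X, 0 ≤ tt u := by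
      intro u hu
      have h1 : |(⟪toE u - toE q, e⟫ : ℝ)| ≤ ‖toE u - toE q‖ := by
        have h := abs_real_inner_le_norm (toE u - toE q) e
        rwa [he, mul_one] at h
      rw [httsub q u, htq] at h1
      have h2 : ‖toE u - toE q‖ ≤ D := hDmax u hu q hqX
      have h3 := abs_le.mp (h1.trans h2)
      linarith [h3.1]
    set R : ℝ := 2*c₂/D with hRdef
    have hR0 : 0 < R := by positivity
    have hRD : R * D = 2*c₂ := by rw [hRdef]; field_simp
    have hRsq : R^2 ≤ c₂ := by
      rw [hRdef, div_pow, div_le_iff₀ (by positivity)]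
      nlinarith
    clear_value R
    have hQpq : ∀ u ∈ X, u ≠ p → u ≠ q → 2*c₁ ≤ D*‖Qf u‖ ∧ D*‖Qf u‖ ≤ 2*c₂ := by
      intro u hu hup huq
      have h := harea p hpX q hqX u hu hpq (Ne.symm hup) (Ne.symm huq)
      have hg : Gv (toE q - toE p) (toE u - toE p) = D * ‖Qf u‖ := by
        rw [← heD, Gv_smul_left, Gv_unit_left _ _ he, abs_of_pos hD0, hQf u, htt u]
      rw [hg] at h
      exact h
    have hQle : ∀ u ∈ X, ‖Qf u‖ ≤ R := by
      intro u hu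
      by_cases hup : u = p
      · rw [hup, hQp, norm_zero]; exact hR0.le
      by_cases huq : u = q
      · rw [huq, hQq, norm_zero]; exact hR0.le
      have h := (hQpq u hu hup huq).2
      rw [hRdef, le_div_iff₀ hD0]
      nlinarith
    have hQge : ∀ u ∈ X, u ≠ p → u ≠ q → 2*c₁/D ≤ ‖Qf u‖ := by
      intro u hu hup huq
      have h := (hQpq u hu hup huq).1
      rw [div_le_iff₀ hD0]
      nlinarith
    set M : ℝ := Real.sqrt (D^2/4 + R^2) with hMdef
    have hM0 : 0 < M := Real.sqrt_pos.mpr (by positivity)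
    have hMsq : M^2 = D^2/4 + R^2 := Real.sq_sqrt (by positivity)
    clear_value M
    have hwitM : ∀ u ∈ X, u ≠ p → u ≠ q → ∃ w, (w = p ∨ w = q) ∧ ‖toE w - toE u‖ ≤ M := by
      intro u hu hup huq
      have hQleu := hQle u hu
      have ht0 := htge u hu
      have htD := htle u hu
      rcases le_or_gt (tt u) (D/2) with h | h
      · refine ⟨p, Or.inl rfl, ?_⟩
        apply le_of_sq_le_sq' (norm_nonneg _) hM0.le
        rw [norm_sub_rev, hpythp u, hMsq]
        have e1 : tt u^2 ≤ (D/2)^2 := by nlinarith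
        have e2 : ‖Qf u‖^2 ≤ R^2 := by nlinarith [norm_nonneg (Qf u)]
        nlinarith
      · refine ⟨q, Or.inr rfl, ?_⟩
        apply le_of_sq_le_sq' (norm_nonneg _) hM0.le
        rw [norm_sub_rev, hpythq u, hMsq]
        have e1 : (tt u - D)^2 ≤ (D/2)^2 := by nlinarith
        have e2 : ‖Qf u‖^2 ≤ R^2 := by nlinarith [norm_nonneg (Qf u)]
        nlinarith
    have hpair : ∀ u ∈ X, ∀ v ∈ X, u ≠ p → u ≠ q → v ≠ p → v ≠ q → u ≠ v →
        2*c₁ ≤ |tt v - tt u| * R + ‖Qf v - Qf u‖ * M := by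
      intro u hu v hv hup huq hvp hvq huv
      obtain ⟨w, hwpq, hwM⟩ := hwitM u hu hup huq
      have hwX : w ∈ X := by rcases hwpq with rfl|rfl; exacts [hpX, hqX]
      have hwu : u ≠ w := by rcases hwpq with rfl|rfl; exacts [hup, huq]
      have hwv : v ≠ w := by rcases hwpq with rfl|rfl; exacts [hvp, hvq]
      have h2c := (harea u hu v hv w hwX huv hwu hwv).1
      have hQw : Qf w = 0 := by rcases hwpq with rfl|rfl; exacts [hQp, hQq]
      have hGe : Gv e (toE w - toE u) = ‖Qf u‖ := by
        rw [Gv_unit_left _ _ he]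
        have h1 : (toE w - toE u) - (⟪toE w - toE u, e⟫ : ℝ) • e = Qf w - Qf u := by
          rw [httsub, hdec u w]
          abel
        rw [h1, hQw, zero_sub, norm_neg]
      have hsplit : Gv (toE v - toE u) (toE w - toE u)
          ≤ |tt v - tt u| * ‖Qf u‖ + ‖Qf v - Qf u‖ * ‖toE w - toE u‖ := by
        rw [hdec u v]
        calc Gv ((tt v - tt u) • e + (Qf v - Qf u)) (toE w - toE u)
            ≤ Gv ((tt v - tt u) • e) (toE w - toE u) + Gv (Qf v - Qf u) (toE w - toE u) :=
              Gv_add_left _ _ _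
          _ ≤ |tt v - tt u| * ‖Qf u‖ + ‖Qf v - Qf u‖ * ‖toE w - toE u‖ := by
              rw [Gv_smul_left, hGe]
              exact add_le_add le_rfl (Gv_le _ _)
      have hQuR : ‖Qf u‖ ≤ R := hQle u hu
      have h4 : |tt v - tt u| * ‖Qf u‖ ≤ |tt v - tt u| * R :=
        mul_le_mul_of_nonneg_left hQuR (abs_nonneg _)
      have h5 : ‖Qf v - Qf u‖ * ‖toE w - toE u‖ ≤ ‖Qf v - Qf u‖ * M :=
        mul_le_mul_of_nonneg_left hwM (norm_nonneg _)
      linarith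
    set γ : ℝ := c₁/(2*R) with hγdef
    have hγ0 : 0 < γ := by positivity
    have hγR : γ * R = c₁/2 := by rw [hγdef]; field_simp
    clear_value γ
    have hγ4 : 4*γ ≤ D := by
      have h1 : γ = c₁*D/(4*c₂) := by rw [hγdef, hRdef]; field_simp; ring
      rw [h1]
      have h2 : 4*(c₁*D/(4*c₂)) = (c₁/c₂)*D := by field_simp
      have h3 : c₁/c₂ ≤ 1 := by rw [div_le_one hc₂]; exact hc₁₂
      rw [h2]
      nlinarith
    set K : ℕ := ⌊D/γ⌋₊ + 1 with hKdef
    have hK1 : 1 ≤ K := Nat.le_add_left 1 _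
    have hKr : (0:ℝ) < (K:ℝ) := by exact_mod_cast hK1
    clear_value K
    set ℓ : ℝ := D/K with hℓdef
    have hℓ0 : 0 < ℓ := by rw [hℓdef]; positivity
    clear_value ℓ
    have hℓγ : ℓ < γ := by
      rw [hℓdef, div_lt_iff₀ hKr]
      have h1 : D/γ < (K:ℝ) := by
        rw [hKdef]; push_cast; exact Nat.lt_floor_add_one _
      calc D = (D/γ)*γ := by field_simp
        _ < (K:ℝ)*γ := mul_lt_mul_of_pos_right h1 hγ0
        _ = γ*(K:ℝ) := mul_comm _ _
    have hDγ : D/γ = 4*c₂/c₁ := by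
      rw [hγdef, hRdef]
      field_simp
      ring
    have hKle : (K:ℝ) ≤ 4*c₂/c₁ + 1 := by
      rw [hKdef]; push_cast
      have h1 := Nat.floor_le (show (0:ℝ) ≤ D/γ by positivity)
      have h2 : ((⌊D/γ⌋₊ : ℕ):ℝ) ≤ 4*c₂/c₁ := by rw [← hDγ]; exact h1
      linarith
    set σ : ℝ := min (2*c₁/D) ((3*c₁/2)/M) with hσdef
    have hσ0 : 0 < σ := lt_min (by positivity) (by positivity)
    clear_value σ
    have hRD2 : R^2*D^2 = 4*c₂^2 := by
      have h0 : R^2*D^2 = (2*c₂)^2 := by rw [← mul_pow, hRD]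
      rw [h0]; ring
    have hRM : R*M ≤ 3/2*c₂ := by
      apply le_of_sq_le_sq' (mul_nonneg hR0.le hM0.le) (by linarith)
      rw [mul_pow, hMsq]
      nlinarith [hRD2, hRsq, sq_nonneg R, hc₂.le]
    have hσlb : R*c₁/c₂ ≤ σ := by
      rw [hσdef]
      apply le_min
      · have h1 : R*c₁/c₂ = 2*c₁/D := by rw [hRdef]; field_simp
        rw [h1]
      · rw [div_le_div_iff₀ hc₂ hM0]
        nlinarith
    have h2Rσ : 2*R/σ ≤ 2*c₂/c₁ := by
      rw [div_le_div_iff₀ hσ0 hc₁]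
      have h1 := mul_le_mul_of_nonneg_left hσlb (by positivity : (0:ℝ) ≤ 2*c₂)
      have h2 : 2*c₂*(R*c₁/c₂) = 2*R*c₁ := by field_simp
      calc 2*R*c₁ = 2*c₂*(R*c₁/c₂) := h2.symm
        _ ≤ 2*c₂*σ := h1
        _ = 2*c₂*σ := rfl
    set jdx : (Fin m → ℝ) → ℕ := fun u => min (⌊tt u / ℓ⌋₊) (K-1) with hjdxdef
    have hjdx : ∀ u, jdx u = min (⌊tt u / ℓ⌋₊) (K-1) := fun _ => rfl
    clear_value jdx
    have hjr : ∀ u ∈ X, jdx u ∈ Finset.range K := by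
      intro u _
      rw [Finset.mem_range, hjdx]
      omega
    have hcellmem : ∀ u ∈ X, ((jdx u : ℝ))*ℓ ≤ tt u ∧ tt u ≤ ((jdx u : ℝ)+1)*ℓ := by
      intro u hu
      have ht0 : 0 ≤ tt u := htge u hu
      have htD : tt u ≤ D := htle u hu
      have hfl := Nat.floor_le (show (0:ℝ) ≤ tt u/ℓ by positivity)
      have hfu := Nat.lt_floor_add_one (tt u/ℓ)
      rcases le_or_gt (⌊tt u/ℓ⌋₊) (K-1) with h | h
      · rw [hjdx, min_eq_left h]
        constructor
        · calc ((⌊tt u/ℓ⌋₊ : ℕ):ℝ)*ℓ ≤ (tt u/ℓ)*ℓ := mul_le_mul_of_nonneg_right hfl hℓ0.le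
            _ = tt u := by field_simp
        · calc tt u = (tt u/ℓ)*ℓ := by field_simp
            _ ≤ (((⌊tt u/ℓ⌋₊ : ℕ):ℝ)+1)*ℓ := mul_le_mul_of_nonneg_right hfu.le hℓ0.le
      · rw [hjdx, min_eq_right h.le]
        have hcast : (((K-1:ℕ)):ℝ)+1 = (K:ℝ) := by
          rw [Nat.cast_sub hK1]
          push_cast
          ring
        constructor
        · have h1 : (((K-1:ℕ)):ℝ) ≤ ((⌊tt u/ℓ⌋₊ : ℕ):ℝ) := by exact_mod_cast h.le
          calc (((K-1:ℕ)):ℝ)*ℓ ≤ ((⌊tt u/ℓ⌋₊ : ℕ):ℝ)*ℓ := mul_le_mul_of_nonneg_right h1 hℓ0.le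
            _ ≤ (tt u/ℓ)*ℓ := mul_le_mul_of_nonneg_right hfl hℓ0.le
            _ = tt u := by field_simp
        · rw [hcast, hℓdef]
          have h2 : (K:ℝ)*(D/(K:ℝ)) = D := by field_simp
          rw [h2]
          exact htD
    have hcell2 : ∀ u ∈ X, ∀ v ∈ X, jdx u = jdx v → |tt u - tt v| ≤ ℓ := by
      intro u hu v hv hj
      have h1 := hcellmem u hu
      have h2 := hcellmem v hv
      rw [hj] at h1
      rw [abs_le]
      constructor <;> linarith [h1.1, h1.2, h2.1, h2.2]
    have hsepQ : ∀ u ∈ X, ∀ v ∈ X, u ≠ v → jdx u = jdx v → σ ≤ ‖Qf u - Qf v‖ := by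
      intro u hu v hv huv hj
      have hΔt := hcell2 u hu v hv hj
      by_cases hupq : u = p ∨ u = q
      · by_cases hvpq : v = p ∨ v = q
        · exfalso
          have hD' : |tt u - tt v| = D := by
            rcases hupq with rfl|rfl <;> rcases hvpq with rfl|rfl
            · exact absurd rfl huv
            · rw [htp, htq, zero_sub, abs_neg, abs_of_pos hD0]
            · rw [htq, htp, sub_zero, abs_of_pos hD0]
            · exact absurd rfl huv
          rw [hD'] at hΔt
          linarith
        · push_neg at hvpq
          have h1 := hQge v hv hvpq.1 hvpq.2
          have hQu : Qf u = 0 := by rcases hupq with rfl|rfl; exacts [hQp, hQq]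
          rw [hQu, zero_sub, norm_neg]
          exact le_trans (by rw [hσdef]; exact min_le_left _ _) h1
      · push_neg at hupq
        by_cases hvpq : v = p ∨ v = q
        · have h1 := hQge u hu hupq.1 hupq.2
          have hQv : Qf v = 0 := by rcases hvpq with rfl|rfl; exacts [hQp, hQq]
          rw [hQv, sub_zero]
          exact le_trans (by rw [hσdef]; exact min_le_left _ _) h1
        · push_neg at hvpq
          have h7 := hpair u hu v hv hupq.1 hupq.2 hvpq.1 hvpq.2 huv
          have h8 : |tt v - tt u| ≤ ℓ := by rw [abs_sub_comm]; exact hΔt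
          have h9 : |tt v - tt u| * R ≤ ℓ*R := mul_le_mul_of_nonneg_right h8 hR0.le
          have h10 : ℓ*R ≤ γ*R := mul_le_mul_of_nonneg_right hℓγ.le hR0.le
          have h11 : 3*c₁/2 ≤ ‖Qf v - Qf u‖ * M := by
            have hgr := hγR
            linarith
          have h12 : (3*c₁/2)/M ≤ ‖Qf v - Qf u‖ := by
            rw [div_le_iff₀ hM0]
            linarith
          rw [norm_sub_rev]
          exact le_trans (by rw [hσdef]; exact min_le_right _ _) h12
    haveI hfact : Fact (Module.finrank ℝ (EuclideanSpace ℝ (Fin m)) = (m-1)+1) :=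
      ⟨by rw [finrank_euclideanSpace_fin]; omega⟩
    set V : Submodule ℝ (EuclideanSpace ℝ (Fin m)) := (ℝ ∙ e)ᗮ with hVdef
    have hdim : Module.finrank ℝ V = m - 1 := Submodule.finrank_orthogonal_span_singleton hne
    have hmemV : ∀ u, Qf u ∈ V :=
      fun u => Submodule.mem_orthogonal_singleton_iff_inner_right.mpr
        (by rw [real_inner_comm]; exact hQorth u)
    set F := (stdOrthonormalBasis ℝ V).repr with hFdef
    have hfiber : ∀ j : ℕ, ((X.filter (fun u => jdx u = j)).card : ℝ)
        ≤ (2*R/σ+1)^(Module.finrank ℝ V) := by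
      intro j
      set Xj := X.filter (fun u => jdx u = j) with hXjdef
      have hXjX : ∀ u ∈ Xj, u ∈ X := fun u hu => (Finset.mem_filter.mp hu).1
      have hXjj : ∀ u ∈ Xj, jdx u = j := fun u hu => (Finset.mem_filter.mp hu).2
      have hinj2 : Set.InjOn (fun u => F ⟨Qf u, hmemV u⟩) Xj := by
        intro a ha b hb hab
        by_contra hne2
        have hsep2 := hsepQ a (hXjX a ha) b (hXjX b hb) hne2
          ((hXjj a ha).trans (hXjj b hb).symm)
        have heq : (⟨Qf a, hmemV a⟩ : V) = ⟨Qf b, hmemV b⟩ := F.injective hab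
        have hQab : Qf a = Qf b := congrArg Subtype.val heq
        rw [hQab, sub_self, norm_zero] at hsep2
        linarith
      have hcardim : (Xj.image (fun u => F ⟨Qf u, hmemV u⟩)).card = Xj.card :=
        Finset.card_image_of_injOn hinj2
      have hpk := pack_lemma (Xj.image (fun u => F ⟨Qf u, hmemV u⟩)) σ R hσ0 hR0.le ?_ ?_
      · rw [hcardim] at hpk
        exact hpk
      · intro a haS b hbS hab
        obtain ⟨u, hu, rfl⟩ := Finset.mem_image.mp haS
        obtain ⟨v, hv, rfl⟩ := Finset.mem_image.mp hbS
        have huv : u ≠ v := by rintro rfl; exact hab rfl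
        have h1 := hsepQ u (hXjX u hu) v (hXjX v hv) huv
          ((hXjj u hu).trans (hXjj v hv).symm)
        have h2 : dist (F ⟨Qf u, hmemV u⟩) (F ⟨Qf v, hmemV v⟩) = ‖Qf u - Qf v‖ := by
          rw [F.dist_map, Subtype.dist_eq, dist_eq_norm]
          try rfl
        rw [h2]
        exact h1
      · intro a haS
        obtain ⟨u, hu, rfl⟩ := Finset.mem_image.mp haS
        have h2 : ‖F ⟨Qf u, hmemV u⟩‖ = ‖Qf u‖ := by
          rw [F.norm_map]
          try rfl
        rw [h2]
        exact hQle u (hXjX u hu)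
    have hsum : X.card = ∑ j ∈ Finset.range K, (X.filter (fun u => jdx u = j)).card :=
      Finset.card_eq_sum_card_fiberwise hjr
    have hQbB : 2*R/σ + 1 ≤ B := by
      rw [hBdef]
      have h1 : 2*c₂/c₁ ≤ (16*c₂^2+1)/(2*c₁) := by
        rw [div_le_div_iff₀ hc₁ (by positivity)]
        nlinarith
      linarith [h2Rσ]
    have hKB : (K:ℝ) ≤ B := by
      rw [hBdef]
      have h1 : 4*c₂/c₁ ≤ (16*c₂^2+1)/(2*c₁) := by
        rw [div_le_div_iff₀ hc₁ (by positivity)]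
        nlinarith
      linarith [hKle]
    have hB0 : (0:ℝ) ≤ B := by rw [hBdef]; positivity
    have hQb0 : (0:ℝ) ≤ 2*R/σ + 1 := by positivity
    calc (X.card : ℝ) = ∑ j ∈ Finset.range K, ((X.filter (fun u => jdx u = j)).card : ℝ) := by
          rw [hsum]
          push_cast
          ring
      _ ≤ ∑ j ∈ Finset.range K, (2*R/σ+1)^(Module.finrank ℝ V) :=
          Finset.sum_le_sum (fun j _ => hfiber j)
      _ = (K:ℝ) * (2*R/σ+1)^(Module.finrank ℝ V) := by
          rw [Finset.sum_const, Finset.card_range, nsmul_eq_mul]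
      _ ≤ B * B^(m-1) := by
          apply mul_le_mul hKB ?_ (by positivity) hB0
          rw [hdim]
          exact pow_le_pow_left₀ hQb0 hQbB _
      _ = B^m := by
          rw [← pow_succ']
          congr 1
          omega

/-- if `X ⊆ ℝ^m` is finite with `n = |X| ≥ 3` and there are
constants `0 < c₁ ≤ c₂` with `c₁ ≤ vol₂(x, y, z) ≤ c₂` for all triples of
distinct points of `X`, then `n ≤ ((16 c₂² + 1)/(2 c₁) + 1)^m`; in particular
`m ≥ log n / log((16 c₂² + 1)/(2 c₁) + 1)`. -/
theorem stmt_19 (m : ℕ) (hm : 1 ≤ m) (X : Finset (Fin m → ℝ)) (hn : 3 ≤ X.card)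
    (c₁ c₂ : ℝ) (hc₁ : 0 < c₁) (hc₁₂ : c₁ ≤ c₂)
    (hvol : ∀ x ∈ X, ∀ y ∈ X, ∀ z ∈ X, x ≠ y → x ≠ z → y ≠ z →
      c₁ ≤ triangleArea x y z ∧ triangleArea x y z ≤ c₂) :
    (X.card : ℝ) ≤ ((16 * c₂ ^ 2 + 1) / (2 * c₁) + 1) ^ m ∧
      Real.log (X.card) / Real.log ((16 * c₂ ^ 2 + 1) / (2 * c₁) + 1) ≤ (m : ℝ) := by
  have hc₂ : 0 < c₂ := lt_of_lt_of_le hc₁ hc₁₂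
  have hmain := main_bound m hm X hn c₁ c₂ hc₁ hc₁₂ hvol
  refine ⟨hmain, ?_⟩
  have hB1 : 1 < (16 * c₂ ^ 2 + 1) / (2 * c₁) + 1 := by
    have h0 : 0 < (16 * c₂ ^ 2 + 1) / (2 * c₁) := by positivity
    linarith
  have hlogB : 0 < Real.log ((16 * c₂ ^ 2 + 1) / (2 * c₁) + 1) := Real.log_pos hB1
  rw [div_le_iff₀ hlogB]
  have hn0 : (0:ℝ) < (X.card:ℝ) := by
    have : 0 < X.card := by omega
    exact_mod_cast this
  have h1 := Real.log_le_log hn0 hmain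
  rw [Real.log_pow] at h1
  linarith
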